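/- Let U ⊆ ℂ be open with z·(z−1)·(z+8) ≠ 0 for all z ∈ U. Let x : ℂ → ℂ be three times differentiable on U and satisfy (x(z)+1)³ = (z+2)³/((z+8)(z−1)²) for all z ∈ U, with x(z)·(x(z)²+3x(z)+3) ≠ 0 for all z ∈ U. Let V ⊆ ℂ be open with x(U) ⊆ V, let ψ solve ψ'' = Q₂·ψ on V, and let g : ℂ → ℂ be twice differentiable and nonvanishing on U with g(z)² = x'(z) for all z ∈ U. Then Φ(z) := ψ(x(z))/g(z) solves Φ'' = Q₃·Φ on U. -/

import Mathlib

open Complex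
open Topology Filter

/-- `f` solves the equation `ψ'' = Q·ψ` on the open set `U`. -/
def SolvesOn (Q f : ℂ → ℂ) (U : Set ℂ) : Prop :=
  (∀ x ∈ U, DifferentiableAt ℂ f x) ∧ (∀ x ∈ U, DifferentiableAt ℂ (deriv f) x) ∧
    ∀ x ∈ U, deriv (deriv f) x = Q x * f x

/-- The coefficient of the normal form (2') of the second Chudnovsky equation. -/
noncomputable def Q₂ (x : ℂ) : ℂ :=
  -(1 / 4) * ((x + 1) * (x + 3) * (x ^ 2 + 3)) / (x ^ 2 * (x ^ 2 + 3 * x + 3) ^ 2)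

/-- The coefficient of the normal form (3') of the third Chudnovsky equation. -/
noncomputable def Q₃ (x : ℂ) : ℂ :=
  -(1 / 4) * (x ^ 4 + 8 * x ^ 3 + 72 * x ^ 2 - 64 * x + 64)
    / (x ^ 2 * (x - 1) ^ 2 * (x + 8) ^ 2)

set_option maxHeartbeats 1000000 in
lemma keyalg (z a A B G G1 G2 X1 X2 X3 : ℂ)
    (hz : z ≠ 0) (hz1 : z - 1 ≠ 0) (hz8 : z + 8 ≠ 0) (hz2 : z + 2 ≠ 0)
    (ha : a ≠ 0) (ha3 : a ^ 2 + 3 * a + 3 ≠ 0) (ha1 : a + 1 ≠ 0) (hG : G ≠ 0)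
    (g0 : G ^ 2 = X1)
    (g1 : 2 * (G * G1) = X2)
    (g2 : 2 * (G1 * G1 + G * G2) = X3)
    (E1 : X1 * ((z + 2) * (z + 8) * (z - 1)) = -18 * (a + 1))
    (E2 : X2 * ((z + 2) * (z + 8) * (z - 1)) + X1 * (3 * z ^ 2 + 18 * z + 6) = -18 * X1)
    (E3 : X3 * ((z + 2) * (z + 8) * (z - 1)) + 2 * (X2 * (3 * z ^ 2 + 18 * z + 6))
        + X1 * (6 * z + 18) = -18 * X2)
    (e0 : (a + 1) ^ 3 * ((z + 8) * (z - 1) ^ 2) = (z + 2) ^ 3) :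
    (((Q₂ a * A * X1 * X1 + B * X2) * G + B * X1 * G1 - (B * X1 * G1 + A * G2)) * G ^ 2 -
        (B * X1 * G - A * G1) * (2 * G ^ 1 * G1)) / (G ^ 2) ^ 2 = Q₃ z * (A / G) := by
  have hX1 : X1 ≠ 0 := by rw [← g0]; exact pow_ne_zero 2 hG
  have main1 : (((Q₂ a * A * X1 * X1 + B * X2) * G + B * X1 * G1 - (B * X1 * G1 + A * G2)) * G ^ 2 -
        (B * X1 * G - A * G1) * (2 * G ^ 1 * G1)) / (G ^ 2) ^ 2
      = (Q₂ a * X1 ^ 2 + (3 / 4) * (X2 / X1) ^ 2 - (1 / 2) * (X3 / X1)) * (A / G) := by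
    rw [← mul_div_assoc, div_eq_div_iff (pow_ne_zero 2 (pow_ne_zero 2 hG)) hG, ← g0, ← g1, ← g2]
    field_simp
    ring
  rw [main1]
  have main2 : Q₂ a * X1 ^ 2 + (3 / 4) * (X2 / X1) ^ 2 - (1 / 2) * (X3 / X1) = Q₃ z := by
    have hp : (z + 2) * (z + 8) * (z - 1) ≠ 0 := mul_ne_zero (mul_ne_zero hz2 hz8) hz1
    have hY2 : X2 / X1 = -(3 * z ^ 2 + 18 * z + 24) / ((z + 2) * (z + 8) * (z - 1)) := by
      rw [div_eq_div_iff hX1 hp]; linear_combination E2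
    have hY3 : X3 / X1 = ((3 * z ^ 2 + 18 * z + 24) * (6 * z ^ 2 + 36 * z + 30)
          - (6 * z + 18) * ((z + 2) * (z + 8) * (z - 1))) / ((z + 2) * (z + 8) * (z - 1)) ^ 2 := by
      rw [div_eq_div_iff hX1 (pow_ne_zero 2 hp)]
      linear_combination ((z + 2) * (z + 8) * (z - 1)) * E3 - (6 * z ^ 2 + 36 * z + 30) * E2
    have hX1v : X1 = -18 * (a + 1) / ((z + 2) * (z + 8) * (z - 1)) := by
      rw [eq_div_iff hp]; linear_combination E1
    have hQ2 : Q₂ a = -((a + 1) * (a + 3) * (a ^ 2 + 3)) / (4 * (a ^ 2 * (a ^ 2 + 3 * a + 3) ^ 2)) := by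
      unfold Q₂; field_simp
    have hQ3 : Q₃ z = -(z ^ 4 + 8 * z ^ 3 + 72 * z ^ 2 - 64 * z + 64)
        / (4 * (z ^ 2 * (z - 1) ^ 2 * (z + 8) ^ 2)) := by
      unfold Q₃; field_simp
    rw [hQ2, hQ3, hY2, hY3, hX1v]
    field_simp [ha, ha3, hz, hz1, hz8, hz2, ha1]
    have ha3' : a * (a + 3) + 3 ≠ 0 := by convert ha3 using 1; ring
    linear_combination (norm := skip) ((((z ^ 2 * (6 * (z * (3 * z + 18) + 24) ^ 2 - 4 * ((z * (3 * z + 18) + 24) * (z * (z * 6 + 36) + 30) - (z + 2) * (z + 8) * (z - 1) * (z * 6 + 18))) + 2 * (z + 2) ^ 2 * (z * (z * (z * (z + 8) + 72) - 64) + 64)) - 648 * z ^ 2) * (a + 1) ^ 3 - ((z + 8) * (z - 1) ^ 2) * (z ^ 2 * (6 * (z * (3 * z + 18) + 24) ^ 2 - 4 * ((z * (3 * z + 18) + 24) * (z * (z * 6 + 36) + 30) - (z + 2) * (z + 8) * (z - 1) * (z * 6 + 18))) + 2 * (z + 2) ^ 2 * (z * (z * (z * (z + 8) + 72) - 64) +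 64)) / (z + 2) ^ 3) / ((a * (a + 3) + 3) ^ 2 * ((z + 8) * (z - 1) ^ 2))) * e0
    field_simp
    ring
  rw [main2]

theorem chudnovsky_three_two_rational_equivalence
    (U V : Set ℂ) (hU : IsOpen U) (hV : IsOpen V)
    (hUne : ∀ z ∈ U, z * (z - 1) * (z + 8) ≠ 0)
    (x g ψ : ℂ → ℂ)
    (hx1 : ∀ z ∈ U, DifferentiableAt ℂ x z)
    (hx2 : ∀ z ∈ U, DifferentiableAt ℂ (deriv x) z)
    (hx3 : ∀ z ∈ U, DifferentiableAt ℂ (deriv (deriv x)) z)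
    (hcurve : ∀ z ∈ U, (x z + 1) ^ 3 = (z + 2) ^ 3 / ((z + 8) * (z - 1) ^ 2))
    (hxne : ∀ z ∈ U, x z * (x z ^ 2 + 3 * x z + 3) ≠ 0)
    (hxV : ∀ z ∈ U, x z ∈ V)
    (hψ : SolvesOn Q₂ ψ V)
    (hg1 : ∀ z ∈ U, DifferentiableAt ℂ g z)
    (hg2 : ∀ z ∈ U, DifferentiableAt ℂ (deriv g) z)
    (hgne : ∀ z ∈ U, g z ≠ 0)
    (hgsq : ∀ z ∈ U, g z ^ 2 = deriv x z) :
    SolvesOn Q₃ (fun z => ψ (x z) / g z) U := by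
  obtain ⟨hψ1, hψ2, hψ3⟩ := hψ
  -- basic nonvanishing
  have hz0 : ∀ w ∈ U, w ≠ 0 := fun w hw =>
    fun h => hUne w hw (by rw [h]; ring)
  have hz1 : ∀ w ∈ U, w - 1 ≠ 0 := fun w hw =>
    fun h => hUne w hw (by rw [h]; ring)
  have hz8 : ∀ w ∈ U, w + 8 ≠ 0 := fun w hw =>
    fun h => hUne w hw (by rw [h]; ring)
  have hane : ∀ w ∈ U, x w ≠ 0 := fun w hw =>
    fun h => hxne w hw (by rw [h]; ring)
  have ha3ne : ∀ w ∈ U, x w ^ 2 + 3 * x w + 3 ≠ 0 := fun w hw =>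
    fun h => hxne w hw (by rw [h]; ring)
  -- analyticity
  have hxdo : DifferentiableOn ℂ x U := fun w hw => (hx1 w hw).differentiableWithinAt
  have hgdo : DifferentiableOn ℂ g U := fun w hw => (hg1 w hw).differentiableWithinAt
  have hψdo : DifferentiableOn ℂ ψ V := fun w hw => (hψ1 w hw).differentiableWithinAt
  have hxan : AnalyticOnNhd ℂ x U := hxdo.analyticOnNhd hU
  have hgan : AnalyticOnNhd ℂ g U := hgdo.analyticOnNhd hU
  have hψan : AnalyticOnNhd ℂ ψ V := hψdo.analyticOnNhd hV
  have hhan : AnalyticOnNhd ℂ (fun z => ψ (x z) / g z) U := fun w hw =>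
    ((hψan _ (hxV w hw)).comp (hxan w hw)).div (hgan w hw) (hgne w hw)
  -- cleared curve equation
  have he0 : ∀ w ∈ U, (x w + 1) ^ 3 * ((w + 8) * (w - 1) ^ 2) = (w + 2) ^ 3 := by
    intro w hw
    rw [hcurve w hw, div_mul_cancel₀]
    exact mul_ne_zero (hz8 w hw) (pow_ne_zero 2 (hz1 w hw))
  have ha1ne : ∀ w ∈ U, w + 2 ≠ 0 → x w + 1 ≠ 0 := by
    intro w hw hw2 h
    apply hw2
    have h3 : (w + 2) ^ 3 = 0 := by rw [← he0 w hw, h]; ring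
    exact pow_eq_zero_iff (by norm_num) |>.1 h3
  -- first derivative of the curve equation
  have he1 : ∀ w ∈ U, 3 * (x w + 1) ^ 2 * deriv x w * ((w + 8) * (w - 1) ^ 2)
      + (x w + 1) ^ 3 * ((w - 1) ^ 2 + (w + 8) * (2 * (w - 1))) = 3 * (w + 2) ^ 2 := by
    intro w hw
    have hX : HasDerivAt (fun t => (x t + 1) ^ 3) ((3 : ℂ) * (x w + 1) ^ (3 - 1) * deriv x w) w :=
      (((hx1 w hw).hasDerivAt).add_const 1).pow 3
    have hq : HasDerivAt (fun t : ℂ => (t + 8) * (t - 1) ^ 2)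
        (1 * (w - 1) ^ 2 + (w + 8) * ((2 : ℂ) * (w - 1) ^ (2 - 1) * 1)) w :=
      ((hasDerivAt_id w).add_const 8).mul (((hasDerivAt_id w).sub_const 1).pow 2)
    have hL := hX.mul hq
    have hR : HasDerivAt (fun t : ℂ => (t + 2) ^ 3) ((3 : ℂ) * (w + 2) ^ (3 - 1) * 1) w :=
      ((hasDerivAt_id w).add_const 2).pow 3
    have hR' : HasDerivAt (fun t => (x t + 1) ^ 3 * ((t + 8) * (t - 1) ^ 2))
        ((3 : ℂ) * (w + 2) ^ (3 - 1) * 1) w :=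
      hR.congr_of_eventuallyEq
        (Filter.eventuallyEq_of_mem (hU.mem_nhds hw) (fun t ht => he0 t ht))
    have := hL.unique hR'
    linear_combination this
  -- the open subset where z + 2 ≠ 0
  set U' : Set ℂ := U ∩ {w | w + 2 ≠ 0} with hU'def
  have hU'open : IsOpen U' := hU.inter (isOpen_compl_singleton.preimage (by fun_prop)
    : IsOpen {w : ℂ | w + 2 ≠ 0})
  have hU'sub : ∀ w ∈ U', w ∈ U := fun w hw => hw.1
  -- clean first-order relation on U'
  have hE1 : ∀ w ∈ U', deriv x w * ((w + 2) * (w + 8) * (w - 1)) = -18 * (x w + 1) := by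
    intro w hw
    obtain ⟨hwU, hw2⟩ := hw
    have h4 : deriv x w * (w + 2) ^ 4 = -18 * (x w + 1) ^ 4 * (w - 1) := by
      linear_combination ((x w + 1) * (w + 2) / 3) * he1 w hwU
        - (deriv x w * (w + 2) + (x w + 1)) * he0 w hwU
    have hc : (w + 2) ^ 3 ≠ 0 := pow_ne_zero _ hw2
    apply mul_right_cancel₀ hc
    linear_combination ((w + 8) * (w - 1)) * h4 - (18 * (x w + 1)) * he0 w hwU
  -- second-order relation on U'
  have hE2 : ∀ w ∈ U', deriv (deriv x) w * ((w + 2) * (w + 8) * (w - 1))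
      + deriv x w * (3 * w ^ 2 + 18 * w + 6) = -18 * deriv x w := by
    intro w hw
    have hp : HasDerivAt (fun t : ℂ => (t + 2) * (t + 8) * (t - 1))
        ((1 * (w + 8) + (w + 2) * 1) * (w - 1) + (w + 2) * (w + 8) * 1) w :=
      (((hasDerivAt_id w).add_const 2).mul ((hasDerivAt_id w).add_const 8)).mul
        ((hasDerivAt_id w).sub_const 1)
    have hL := ((hx2 w (hU'sub w hw)).hasDerivAt).mul hp
    have hR : HasDerivAt (fun t => -18 * (x t + 1)) (-18 * deriv x w) w :=
      (((hx1 w (hU'sub w hw)).hasDerivAt).add_const 1).const_mul (-18)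
    have hR' : HasDerivAt (fun t => deriv x t * ((t + 2) * (t + 8) * (t - 1)))
        (-18 * deriv x w) w :=
      hR.congr_of_eventuallyEq
        (Filter.eventuallyEq_of_mem (hU'open.mem_nhds hw) (fun t ht => hE1 t ht))
    have := hL.unique hR'
    linear_combination this
  -- third-order relation on U'
  have hE3 : ∀ w ∈ U', deriv (deriv (deriv x)) w * ((w + 2) * (w + 8) * (w - 1))
      + 2 * (deriv (deriv x) w * (3 * w ^ 2 + 18 * w + 6))
      + deriv x w * (6 * w + 18) = -18 * deriv (deriv x) w := by
    intro w hw
    have hp : HasDerivAt (fun t : ℂ => (t + 2) * (t + 8) * (t - 1))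
        ((1 * (w + 8) + (w + 2) * 1) * (w - 1) + (w + 2) * (w + 8) * 1) w :=
      (((hasDerivAt_id w).add_const 2).mul ((hasDerivAt_id w).add_const 8)).mul
        ((hasDerivAt_id w).sub_const 1)
    have hq : HasDerivAt (fun t : ℂ => 3 * t ^ 2 + 18 * t + 6)
        (3 * ((2 : ℂ) * w ^ (2 - 1) * 1) + 18 * 1) w :=
      ((((hasDerivAt_id w).pow 2).const_mul 3).add ((hasDerivAt_id w).const_mul 18)).add_const 6
    have hL := (((hx3 w (hU'sub w hw)).hasDerivAt).mul hp).add
      (((hx2 w (hU'sub w hw)).hasDerivAt).mul hq)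
    have hR : HasDerivAt (fun t => -18 * deriv x t) (-18 * deriv (deriv x) w) w :=
      ((hx2 w (hU'sub w hw)).hasDerivAt).const_mul (-18)
    have hR' : HasDerivAt
        (fun t => deriv (deriv x) t * ((t + 2) * (t + 8) * (t - 1))
          + deriv x t * (3 * t ^ 2 + 18 * t + 6)) (-18 * deriv (deriv x) w) w :=
      hR.congr_of_eventuallyEq
        (Filter.eventuallyEq_of_mem (hU'open.mem_nhds hw) (fun t ht => hE2 t ht))
    have := hL.unique hR'
    linear_combination this
  -- relations for g
  have hgg1 : ∀ w ∈ U, 2 * (g w * deriv g w) = deriv (deriv x) w := by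
    intro w hw
    have hL : HasDerivAt (fun t => g t ^ 2) ((2 : ℂ) * g w ^ (2 - 1) * deriv g w) w :=
      ((hg1 w hw).hasDerivAt).pow 2
    have hR' : HasDerivAt (fun t => g t ^ 2) (deriv (deriv x) w) w :=
      ((hx2 w hw).hasDerivAt).congr_of_eventuallyEq
        (Filter.eventuallyEq_of_mem (hU.mem_nhds hw) (fun t ht => hgsq t ht))
    have := hL.unique hR'
    linear_combination this
  have hgg2 : ∀ w ∈ U, 2 * (deriv g w * deriv g w + g w * deriv (deriv g) w)
      = deriv (deriv (deriv x)) w := by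
    intro w hw
    have hL : HasDerivAt (fun t => 2 * (g t * deriv g t))
        (2 * (deriv g w * deriv g w + g w * deriv (deriv g) w)) w :=
      (((hg1 w hw).hasDerivAt).mul ((hg2 w hw).hasDerivAt)).const_mul 2
    have hR' : HasDerivAt (fun t => 2 * (g t * deriv g t)) (deriv (deriv (deriv x)) w) w :=
      ((hx3 w hw).hasDerivAt).congr_of_eventuallyEq
        (Filter.eventuallyEq_of_mem (hU.mem_nhds hw) (fun t ht => hgg1 t ht))
    exact hL.unique hR'
  -- first derivative of h
  have hder1 : ∀ w ∈ U, deriv (fun z => ψ (x z) / g z) w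
      = (deriv ψ (x w) * deriv x w * g w - ψ (x w) * deriv g w) / g w ^ 2 := by
    intro w hw
    have hAx : HasDerivAt (fun t => ψ (x t)) (deriv ψ (x w) * deriv x w) w :=
      ((hψ1 _ (hxV w hw)).hasDerivAt).comp w ((hx1 w hw).hasDerivAt)
    exact (hAx.div ((hg1 w hw).hasDerivAt) (hgne w hw)).deriv
  -- the main computation away from z = -2
  have hmain : ∀ z ∈ U, z + 2 ≠ 0 →
      deriv (deriv (fun z => ψ (x z) / g z)) z = Q₃ z * (ψ (x z) / g z) := by
    intro z hz hz2
    have hzU' : z ∈ U' := ⟨hz, hz2⟩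
    have hxVz := hxV z hz
    have hgz := hgne z hz
    have hd2 : deriv (deriv (fun z => ψ (x z) / g z)) z
        = deriv (fun w => (deriv ψ (x w) * deriv x w * g w - ψ (x w) * deriv g w) / g w ^ 2) z :=
      Filter.EventuallyEq.deriv_eq
        (Filter.eventuallyEq_of_mem (hU.mem_nhds hz) (fun w hw => hder1 w hw))
    have hψ'x : HasDerivAt (deriv ψ) (Q₂ (x z) * ψ (x z)) (x z) := by
      have h := (hψ2 _ hxVz).hasDerivAt
      rwa [hψ3 _ hxVz] at h
    have hxd := (hx1 z hz).hasDerivAt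
    have hBx : HasDerivAt (fun w => deriv ψ (x w)) (Q₂ (x z) * ψ (x z) * deriv x z) z :=
      hψ'x.comp z hxd
    have hAx : HasDerivAt (fun w => ψ (x w)) (deriv ψ (x z) * deriv x z) z :=
      ((hψ1 _ hxVz).hasDerivAt).comp z hxd
    have hN := ((hBx.mul ((hx2 z hz).hasDerivAt)).mul ((hg1 z hz).hasDerivAt)).sub
      (hAx.mul ((hg2 z hz).hasDerivAt))
    have hF := hN.div (((hg1 z hz).hasDerivAt).pow 2) (pow_ne_zero 2 hgz)
    rw [hd2, show (fun w => (deriv ψ (x w) * deriv x w * g w - ψ (x w) * deriv g w) / g w ^ 2) = ((fun w => deriv ψ (x w)) * deriv x * g - (fun w => ψ (x w)) * deriv g) / g ^ 2 from rfl, hF.deriv]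
    simp only [Pi.mul_apply, Pi.sub_apply, Pi.pow_apply, Pi.div_apply]
    have final := keyalg z (x z) (ψ (x z)) (deriv ψ (x z)) (g z) (deriv g z)
      (deriv (deriv g) z) (deriv x z) (deriv (deriv x) z) (deriv (deriv (deriv x)) z)
      (hz0 z hz) (hz1 z hz) (hz8 z hz) hz2 (hane z hz) (ha3ne z hz) (ha1ne z hz hz2) hgz
      (hgsq z hz) (hgg1 z hz) (hgg2 z hz) (hE1 z hzU') (hE2 z hzU') (hE3 z hzU') (he0 z hz)
    linear_combination final
  refine ⟨fun w hw => (hhan w hw).differentiableAt,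
    fun w hw => ((hhan.deriv) w hw).differentiableAt, fun z hz => ?_⟩
  by_cases hz2 : z + 2 = 0
  · -- continuity argument at z = -2
    have hu : ContinuousAt (deriv (deriv (fun z => ψ (x z) / g z))) z :=
      ((hhan.deriv.deriv) z hz).differentiableAt.continuousAt
    have hQ3 : ContinuousAt Q₃ z := by
      have hden : (z : ℂ) ^ 2 * (z - 1) ^ 2 * (z + 8) ^ 2 ≠ 0 :=
        mul_ne_zero (mul_ne_zero (pow_ne_zero 2 (hz0 z hz)) (pow_ne_zero 2 (hz1 z hz)))
          (pow_ne_zero 2 (hz8 z hz))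
      unfold Q₃
      exact ContinuousAt.div (by fun_prop) (by fun_prop) hden
    have hv : ContinuousAt (fun w => Q₃ w * (ψ (x w) / g w)) z :=
      hQ3.mul ((hhan z hz).differentiableAt.continuousAt)
    have hEqOn : Set.EqOn (deriv (deriv (fun z => ψ (x z) / g z)))
        (fun w => Q₃ w * (ψ (x w) / g w)) (U \ {z}) := by
      intro w hw
      have hw2 : w + 2 ≠ 0 := by
        intro h
        exact hw.2 (Set.mem_singleton_iff.2 (by linear_combination h - hz2))
      exact hmain w hw.1 hw2
    have hne : (𝓝[U \ {z}] z).NeBot := by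
      have hUz : U \ {z} = {z}ᶜ ∩ U := by ext w; simp [Set.mem_diff, and_comm]
      rw [hUz, nhdsWithin_inter_of_mem' (mem_nhdsWithin_of_mem_nhds (hU.mem_nhds hz))]
      exact Filter.NeBot.mono (by infer_instance) le_rfl
    have l1 : Filter.Tendsto (deriv (deriv (fun z => ψ (x z) / g z))) (𝓝[U \ {z}] z)
        (𝓝 (deriv (deriv (fun z => ψ (x z) / g z)) z)) := hu.continuousWithinAt.tendsto
    have l2 : Filter.Tendsto (deriv (deriv (fun z => ψ (x z) / g z))) (𝓝[U \ {z}] z)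
        (𝓝 (Q₃ z * (ψ (x z) / g z))) := by
      refine Filter.Tendsto.congr' ?_ hv.continuousWithinAt.tendsto
      exact Filter.eventuallyEq_of_mem self_mem_nhdsWithin (fun w hw => (hEqOn hw).symm)
    exact tendsto_nhds_unique l1 l2
  · exact hmain z hz hz2
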